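/- Let τ be a finite sequence of distinct natural numbers and k a natural number not occurring in τ, and suppose aix f(k,τ) = 0 and τ = f(l,σ) for some natural number l and sequence σ of distinct naturals with l not occurring in σ. Then des f(k,τ) = 1 + des f(k,σ). -/

import Mathlib

namespace PaperStats

/-- `des w` is the number of descents of the word `w` (0-indexed positions `i`
with `w(i) > w(i+1)`). -/
def des (w : List ℕ) : ℕ :=
  ((Finset.range (w.length - 1)).filter fun i => w.getD (i + 1) 0 < w.getD i 0).card

/-- `inv w` is the number of inversions of the word `w`: pairs of positions
`i < j` with `w(i) > w(j)`. -/
def inv (w : List ℕ) : ℕ :=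
  ((Finset.range w.length ×ˢ Finset.range w.length).filter
    fun p => p.1 < p.2 ∧ w.getD p.2 0 < w.getD p.1 0).card

/-- An inversion `(i,j)` of `w` is admissible if either `w(j) < w(j+1)`
(`j` is not the last position and is followed by an ascent), or there is a
position `k` strictly between `i` and `j` with `w(j) > w(k)`. -/
def IsAdmissible (w : List ℕ) (i j : ℕ) : Prop :=
  (j + 1 < w.length ∧ w.getD j 0 < w.getD (j + 1) 0) ∨
    ∃ k, i < k ∧ k < j ∧ w.getD k 0 < w.getD j 0

instance (w : List ℕ) (i j : ℕ) : Decidable (IsAdmissible w i j) :=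
  decidable_of_iff ((j + 1 < w.length ∧ w.getD j 0 < w.getD (j + 1) 0) ∨
      ∃ k ∈ Finset.Ioo i j, w.getD k 0 < w.getD j 0) (by
    unfold IsAdmissible
    simp only [Finset.mem_Ioo, and_assoc])

/-- `ai w` is the number of admissible inversions of `w`. -/
def ai (w : List ℕ) : ℕ :=
  ((Finset.range w.length ×ˢ Finset.range w.length).filter
    fun p => p.1 < p.2 ∧ w.getD p.2 0 < w.getD p.1 0 ∧ IsAdmissible w p.1 p.2).card

/-- `aid w = ai w + des w`. -/
def aid (w : List ℕ) : ℕ := ai w + des w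

/-- The statistic `aix`, defined recursively: `aix ∅ = 0`; writing a nonempty
word as `π = α m β`, where `m` is the smallest letter and `α` is the maximal
prefix not containing `m`, one has `aix π = 1 + aix β` if `α = ∅`,
`aix π = 0` if `β = ∅` (and `α ≠ ∅`), and `aix π = aix α` otherwise. -/
def aix : List ℕ → ℕ
  | [] => 0
  | x :: xs =>
    if (x :: xs).takeWhile (fun a => decide (a ≠ xs.foldr min x)) = [] then
      1 + aix (((x :: xs).dropWhile (fun a => decide (a ≠ xs.foldr min x))).tail)
    else if ((x :: xs).dropWhile (fun a => decide (a ≠ xs.foldr min x))).tail = [] then 0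
    else aix ((x :: xs).takeWhile (fun a => decide (a ≠ xs.foldr min x)))
termination_by w => w.length
decreasing_by
  all_goals simp only [List.foldr_attach] at *
  · have h1 := (List.dropWhile_sublist (l := x :: xs) (fun a => decide (a ≠ xs.foldr min x))).length_le
    have h2 := List.length_tail (l := (x :: xs).dropWhile (fun a => decide (a ≠ xs.foldr min x)))
    simp only [List.length_cons] at *
    omega
  · rename_i hα hβ
    have h0 : ((x :: xs).takeWhile (fun a => decide (a ≠ xs.foldr min x))) ++
        ((x :: xs).dropWhile (fun a => decide (a ≠ xs.foldr min x))) = x :: xs :=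
      List.takeWhile_append_dropWhile ..
    have h1 : ((x :: xs).dropWhile (fun a => decide (a ≠ xs.foldr min x))) ≠ [] := by
      intro h
      apply hβ
      rw [h]
      rfl
    have h2 := congrArg List.length h0
    simp only [List.length_append, List.length_cons] at h2
    have h3 : 0 < ((x :: xs).dropWhile (fun a => decide (a ≠ xs.foldr min x))).length :=
      List.length_pos_iff.mpr h1
    simp only [List.length_cons]
    omega

/-- The map `f(k,τ)`: with `m` the smallest letter of `τ` together with `k`
(`k` not occurring in `τ`), and `τ = α m β` with `α` the maximal prefix of `τ`
avoiding `m`: `f(k,∅) = k`; `f(k,τ) = kτ` if `k = m`; and for `k > m`,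
`f(k,τ) = f(k,β) m` if `α = ∅`, `f(k,τ) = k m α` if `β = ∅`, and
`f(k,τ) = f(k,α) m β` otherwise. -/
def fkt (k : ℕ) : List ℕ → List ℕ
  | [] => [k]
  | x :: xs =>
    if k < xs.foldr min x then k :: x :: xs
    else if (x :: xs).takeWhile (fun a => decide (a ≠ xs.foldr min x)) = [] then
      fkt k (((x :: xs).dropWhile (fun a => decide (a ≠ xs.foldr min x))).tail) ++
        [xs.foldr min x]
    else if ((x :: xs).dropWhile (fun a => decide (a ≠ xs.foldr min x))).tail = [] then
      k :: xs.foldr min x :: ((x :: xs).takeWhile (fun a => decide (a ≠ xs.foldr min x)))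
    else
      fkt k ((x :: xs).takeWhile (fun a => decide (a ≠ xs.foldr min x))) ++
        xs.foldr min x :: ((x :: xs).dropWhile (fun a => decide (a ≠ xs.foldr min x))).tail
termination_by w => w.length
decreasing_by
  all_goals simp only [List.foldr_attach] at *
  · have h1 := (List.dropWhile_sublist (l := x :: xs) (fun a => decide (a ≠ xs.foldr min x))).length_le
    have h2 := List.length_tail (l := (x :: xs).dropWhile (fun a => decide (a ≠ xs.foldr min x)))
    simp only [List.length_cons] at *
    omega
  · rename_i hk hα hβ
    have h0 : ((x :: xs).takeWhile (fun a => decide (a ≠ xs.foldr min x))) ++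
        ((x :: xs).dropWhile (fun a => decide (a ≠ xs.foldr min x))) = x :: xs :=
      List.takeWhile_append_dropWhile ..
    have h1 : ((x :: xs).dropWhile (fun a => decide (a ≠ xs.foldr min x))) ≠ [] := by
      intro h
      apply hβ
      rw [h]
      rfl
    have h2 := congrArg List.length h0
    simp only [List.length_append, List.length_cons] at h2
    have h3 : 0 < ((x :: xs).dropWhile (fun a => decide (a ≠ xs.foldr min x))).length :=
      List.length_pos_iff.mpr h1
    simp only [List.length_cons]
    omega

/-- `ini w` is the first letter of `w`. -/
def ini (w : List ℕ) : ℕ := w.headD 0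

/-- The word of a permutation `π ∈ S_n`, namely `π(1) π(2) … π(n)`
(with values in `{1, …, n}`). -/
def permList {n : ℕ} (π : Equiv.Perm (Fin n)) : List ℕ :=
  List.ofFn fun i => (π i : ℕ) + 1

/-- The bijection `φ`: `φ(π) = f(π(1), f(π(2), ⋯ f(π(n), ∅) ⋯ ))`. -/
def phiW (w : List ℕ) : List ℕ := w.foldr fkt []

/-- Helper: `decRun l` splits `l` into its maximal weakly decreasing prefix
and the rest. -/
def decRun : List ℕ → List ℕ × List ℕ
  | [] => ([], [])
  | [x] => ([x], [])
  | x :: y :: rest =>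
    if y ≤ x then ((x :: (decRun (y :: rest)).1), (decRun (y :: rest)).2)
    else ([x], y :: rest)

theorem decRun_append : ∀ l : List ℕ, (decRun l).1 ++ (decRun l).2 = l
  | [] => rfl
  | [x] => rfl
  | x :: y :: rest => by
    rw [decRun]
    split
    · simpa using decRun_append (y :: rest)
    · rfl

/-- Helper computing the hook factorization of a word from its reversal: the
rightmost hook of the word starts at its rightmost descent top, i.e. it is
obtained by extending the maximal weakly decreasing prefix of the reversed word
by one more letter; the process is repeated on what remains, and when no
letters usable for a hook remain the word left over is the increasing part
`π₀`. The result is `(π₀, [π₁, …, π_k])`. -/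
def hookRev (r : List ℕ) : List ℕ × List (List ℕ) :=
  match h : (decRun r).2 with
  | [] => (r.reverse, [])
  | z :: rest =>
    ((hookRev rest).1, (hookRev rest).2 ++ [z :: (decRun r).1.reverse])
termination_by r.length
decreasing_by
  have h2 := congrArg List.length (decRun_append r)
  rw [h] at h2
  simp only [List.length_append, List.length_cons] at h2
  omega

/-- The hook factorization `(π₀, [π₁, …, π_k])` of a word
`w = π₀ π₁ ⋯ π_k`, where `π₀` is increasing and each `π_i`, `i ≥ 1`, is a
hook. -/
def hookSplit (w : List ℕ) : List ℕ × List (List ℕ) := hookRev w.reverse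

/-- `pix w` is the length of the initial increasing factor `π₀` in the hook
factorization of `w`. -/
def pix (w : List ℕ) : ℕ := (hookSplit w).1.length

/-- `lec w` is the sum of the numbers of inversions of the hooks in the hook
factorization of `w`. -/
def lec (w : List ℕ) : ℕ := ((hookSplit w).2.map inv).sum

/-- A word `w(1) … w(r)` with `r ≥ 2` is a hook if
`w(1) > w(2) ≤ w(3) ≤ ⋯ ≤ w(r)`. -/
def IsHook (w : List ℕ) : Prop :=
  ∃ a b rest, w = a :: b :: rest ∧ b < a ∧ List.Chain' (· ≤ ·) (b :: rest)

/-- `w(i)` is a left-to-right maximum of `w` if `w(k) < w(i)` for all `k < i`. -/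
def IsLRMax (w : List ℕ) (i : ℕ) : Prop := ∀ k < i, w.getD k 0 < w.getD i 0

instance (w : List ℕ) (i : ℕ) : Decidable (IsLRMax w i) := by
  unfold IsLRMax; infer_instance

/-- `mix w` counts the pairs of positions `i < j` such that either
`w(i) > w(j)` and `w(i)` is a left-to-right maximum, or `w(i) < w(j)` and
there is `k < i` with `w(k) > w(j)`. -/
def mix (w : List ℕ) : ℕ :=
  ((Finset.range w.length ×ˢ Finset.range w.length).filter fun p =>
    p.1 < p.2 ∧ ((w.getD p.2 0 < w.getD p.1 0 ∧ IsLRMax w p.1) ∨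
      (w.getD p.1 0 < w.getD p.2 0 ∧ ∃ k ∈ Finset.range p.1, w.getD p.2 0 < w.getD k 0))).card

/-- `das w` counts the positions `i` such that either `w(i) > w(i+1)` and
`w(i)` is a left-to-right maximum, or `w(i) < w(i+1)` and there is `k < i`
with `w(k) > w(i+1)`. -/
def das (w : List ℕ) : ℕ :=
  ((Finset.range (w.length - 1)).filter fun i =>
    (w.getD (i + 1) 0 < w.getD i 0 ∧ IsLRMax w i) ∨
      (w.getD i 0 < w.getD (i + 1) 0 ∧ ∃ k ∈ Finset.range i, w.getD (i + 1) 0 < w.getD k 0)).card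

/-- The values of the left-to-right maxima of a word, listed in increasing
order (which is also their order of occurrence). -/
def lrMaxima : List ℕ → List ℕ
  | [] => []
  | x :: xs => x :: lrMaxima (xs.filter fun a => decide (x < a))
termination_by l => l.length
decreasing_by
  simp only [List.length_unattach]
  have := xs.length_filter_le (fun a => decide (x < a))
  simp only [List.length_cons]
  exact Nat.lt_succ_of_le ((List.length_filter_le _ _).trans_eq List.length_attach)

/-- `Bset w m` is the list of entries of `w` that are smaller than `m` and lie
to the right of (the first occurrence of) `m` in `w`. -/
def Bset (w : List ℕ) (m : ℕ) : List ℕ :=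
  ((w.dropWhile fun a => decide (a ≠ m)).tail).filter fun a => decide (a < m)

/-- Helper for `psiS`: replace the letters satisfying `P`, in order, by the
letters of the first list. -/
def replaceSub (P : ℕ → Bool) : List ℕ → List ℕ → List ℕ
  | _, [] => []
  | rs, x :: xs =>
    if P x then rs.headD x :: replaceSub P rs.tail xs else x :: replaceSub P rs xs

/-- `psiS S w` is `ψ_S(w)`: the result of reversing, in place, the subword of
`w` consisting of the entries belonging to `S`. -/
def psiS (S : List ℕ) (w : List ℕ) : List ℕ :=
  replaceSub (fun a => decide (a ∈ S)) ((w.filter fun a => decide (a ∈ S)).reverse) w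

/-- Helper applying the alternating composition
`ψ_{B₁} ∘ ψ_{B₂ ∩ B₁} ∘ ψ_{B₂} ∘ ⋯ ∘ ψ_{B_{k-1}} ∘ ψ_{B_k ∩ B_{k-1}} ∘ ψ_{B_k}`
to `w`, given the list `[B_k, B_{k-1}, …, B₁]`. -/
def psiChain : List (List ℕ) → List ℕ → List ℕ
  | [], w => w
  | [B], w => psiS B w
  | B :: B' :: rest, w => psiChain (B' :: rest) (psiS (B.inter B') (psiS B w))

/-- The Brändén–Claesson bijection `ψ`. -/
def psi (w : List ℕ) : List ℕ :=
  psiChain (((lrMaxima w).map (Bset w)).reverse) w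
/-! ### basic min lemmas -/

lemma foldr_min_le : ∀ (xs : List ℕ) (x : ℕ), ∀ a ∈ x :: xs, xs.foldr min x ≤ a := by
  intro xs
  induction xs with
  | nil => intro x a ha; simp at ha ⊢; omega
  | cons y ys ih =>
    intro x a ha
    simp only [List.foldr_cons]
    simp only [List.mem_cons] at ha
    have h1 := ih x x (by simp)
    have h2 := fun b hb => ih x b (List.mem_cons_of_mem _ hb)
    rcases ha with rfl | rfl | ha
    · exact le_trans (min_le_right _ _) h1
    · exact min_le_left _ _
    · exact le_trans (min_le_right _ _) (h2 a ha)

lemma foldr_min_mem : ∀ (xs : List ℕ) (x : ℕ), xs.foldr min x ∈ x :: xs := by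
  intro xs
  induction xs with
  | nil => simp
  | cons y ys ih =>
    intro x
    simp only [List.foldr_cons]
    rcases min_choice y (ys.foldr min x) with h | h
    · rw [h]; simp
    · rw [h]
      have := ih x
      simp only [List.mem_cons] at this ⊢
      tauto

lemma foldr_min_eq (x : ℕ) (xs : List ℕ) (M : ℕ) (hM : M ∈ x :: xs)
    (hle : ∀ a ∈ x :: xs, M ≤ a) : xs.foldr min x = M :=
  le_antisymm (foldr_min_le xs x M hM) (hle _ (foldr_min_mem xs x))

/-- first occurrence decomposition -/
lemma first_occ (M : ℕ) : ∀ (l : List ℕ), M ∈ l →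
    ∃ A B, l = A ++ M :: B ∧ M ∉ A ∧
      l.takeWhile (fun a => decide (a ≠ M)) = A ∧
      l.dropWhile (fun a => decide (a ≠ M)) = M :: B := by
  intro l
  induction l with
  | nil => intro h; simp at h
  | cons c t ih =>
    intro h
    by_cases hc : c = M
    · subst hc
      exact ⟨[], t, by simp, by simp, by simp, by simp⟩
    · have hM : M ∈ t := (List.mem_cons.mp h).resolve_left (fun h' => hc h'.symm)
      obtain ⟨A, B, h1, h2, h3, h4⟩ := ih hM
      refine ⟨c :: A, B, by simp [h1], by simp [h2, hc, Ne.symm], ?_, ?_⟩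
      · rw [List.takeWhile_cons, if_pos (by simp [hc]), h3]
      · rw [List.dropWhile_cons, if_pos (by simp [hc]), h4]

lemma takedrop_decomp (M : ℕ) (A B : List ℕ) (hmem : M ∉ A) :
    (A ++ M :: B).takeWhile (fun a => decide (a ≠ M)) = A ∧
    (A ++ M :: B).dropWhile (fun a => decide (a ≠ M)) = M :: B := by
  induction A with
  | nil => simp
  | cons a A ih =>
    have ha : a ≠ M := by intro h; exact hmem (by simp [h])
    have h2 := ih (fun h => hmem (by simp [h]))
    constructor
    · rw [List.cons_append, List.takeWhile_cons, if_pos (by simp [ha]), h2.1]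
    · rw [List.cons_append, List.dropWhile_cons, if_pos (by simp [ha]), h2.2]
/-! ### equation lemmas for fkt and aix given a decomposition -/

lemma fkt_nil (k : ℕ) : fkt k [] = [k] := by rw [fkt]

lemma fkt_eq_lt (k : ℕ) (x : ℕ) (xs : List ℕ) (M : ℕ) (hM : M ∈ x :: xs)
    (hle : ∀ a ∈ x :: xs, M ≤ a) (h : k < M) :
    fkt k (x :: xs) = k :: x :: xs := by
  rw [fkt, foldr_min_eq x xs M hM hle, if_pos h]

lemma fkt_eq_top (k M : ℕ) (B : List ℕ) (hle : ∀ a ∈ B, M ≤ a) (h : M < k) :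
    fkt k (M :: B) = fkt k B ++ [M] := by
  have hM : M ∈ M :: B := by simp
  have hle' : ∀ a ∈ M :: B, M ≤ a := by
    intro a ha
    rcases List.mem_cons.mp ha with rfl | ha
    · exact le_refl _
    · exact hle a ha
  have htd := takedrop_decomp M [] B (by simp)
  simp only [List.nil_append] at htd
  rw [fkt, foldr_min_eq M B M hM hle', htd.1, htd.2, List.tail_cons,
    if_neg (by omega), if_pos rfl]

lemma fkt_eq_last (k M : ℕ) (A : List ℕ) (hA : A ≠ []) (hmem : M ∉ A)
    (hle : ∀ a ∈ A ++ [M], M ≤ a) (h : M < k) :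
    fkt k (A ++ [M]) = k :: M :: A := by
  obtain ⟨a, A', rfl⟩ : ∃ a A', A = a :: A' := by
    cases A with | nil => exact absurd rfl hA | cons a A' => exact ⟨a, A', rfl⟩
  have htd := takedrop_decomp M (a :: A') [] hmem
  have hM : M ∈ (a :: A') ++ [M] := by simp
  rw [List.cons_append] at htd hM hle ⊢
  rw [fkt, foldr_min_eq _ _ M hM hle, htd.1, htd.2, List.tail_cons,
    if_neg (by omega), if_neg (by simp), if_pos rfl]

lemma fkt_eq_mid (k M : ℕ) (A B : List ℕ) (hA : A ≠ []) (hB : B ≠ []) (hmem : M ∉ A)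
    (hle : ∀ a ∈ A ++ M :: B, M ≤ a) (h : M < k) :
    fkt k (A ++ M :: B) = fkt k A ++ M :: B := by
  obtain ⟨a, A', rfl⟩ : ∃ a A', A = a :: A' := by
    cases A with | nil => exact absurd rfl hA | cons a A' => exact ⟨a, A', rfl⟩
  have htd := takedrop_decomp M (a :: A') B hmem
  have hM : M ∈ (a :: A') ++ M :: B := by simp
  rw [List.cons_append] at htd hM hle ⊢
  rw [fkt, foldr_min_eq _ _ M hM hle, htd.1, htd.2, List.tail_cons,
    if_neg (by omega), if_neg (by simp), if_neg hB]

lemma aix_eq_top (M : ℕ) (B : List ℕ) (hle : ∀ a ∈ B, M ≤ a) :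
    aix (M :: B) = 1 + aix B := by
  have hM : M ∈ M :: B := by simp
  have hle' : ∀ a ∈ M :: B, M ≤ a := by
    intro a ha
    rcases List.mem_cons.mp ha with rfl | ha
    · exact le_refl _
    · exact hle a ha
  have htd := takedrop_decomp M [] B (by simp)
  simp only [List.nil_append] at htd
  rw [aix, foldr_min_eq M B M hM hle', htd.1, htd.2, List.tail_cons, if_pos rfl]

lemma aix_eq_last (M : ℕ) (A : List ℕ) (hA : A ≠ []) (hmem : M ∉ A)
    (hle : ∀ a ∈ A ++ [M], M ≤ a) :
    aix (A ++ [M]) = 0 := by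
  obtain ⟨a, A', rfl⟩ : ∃ a A', A = a :: A' := by
    cases A with | nil => exact absurd rfl hA | cons a A' => exact ⟨a, A', rfl⟩
  have htd := takedrop_decomp M (a :: A') [] hmem
  have hM : M ∈ (a :: A') ++ [M] := by simp
  rw [List.cons_append] at htd hM hle ⊢
  rw [aix, foldr_min_eq _ _ M hM hle, htd.1, htd.2, List.tail_cons,
    if_neg (by simp), if_pos rfl]

lemma aix_eq_mid (M : ℕ) (A B : List ℕ) (hA : A ≠ []) (hB : B ≠ []) (hmem : M ∉ A)
    (hle : ∀ a ∈ A ++ M :: B, M ≤ a) :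
    aix (A ++ M :: B) = aix A := by
  obtain ⟨a, A', rfl⟩ : ∃ a A', A = a :: A' := by
    cases A with | nil => exact absurd rfl hA | cons a A' => exact ⟨a, A', rfl⟩
  have htd := takedrop_decomp M (a :: A') B hmem
  have hM : M ∈ (a :: A') ++ M :: B := by simp
  rw [List.cons_append] at htd hM hle ⊢
  rw [aix, foldr_min_eq _ _ M hM hle, htd.1, htd.2, List.tail_cons,
    if_neg (by simp), if_neg hB]
lemma aix_nil : aix [] = 0 := by rw [aix]

lemma aix_single (k : ℕ) : aix [k] = 1 := by
  have := aix_eq_top k [] (by simp)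
  rw [this, aix_nil]

lemma mem_fkt_aux : ∀ (n : ℕ) (σ : List ℕ), σ.length ≤ n → ∀ k, k ∉ σ →
    ∀ a, (a ∈ fkt k σ ↔ a = k ∨ a ∈ σ) := by
  intro n
  induction n with
  | zero =>
    intro σ hlen k hk a
    have : σ = [] := List.length_eq_zero_iff.mp (Nat.le_zero.mp hlen)
    subst this
    rw [fkt_nil]
    simp
  | succ n ih =>
    intro σ hlen k hk a
    cases σ with
    | nil => rw [fkt_nil]; simp
    | cons x xs =>
      have hM'mem := foldr_min_mem xs x
      have hM'le := foldr_min_le xs x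
      obtain ⟨A, B, hd, hmA, -, -⟩ := first_occ _ (x :: xs) hM'mem
      set M := xs.foldr min x with hMdef
      have hlenAB : A.length + B.length + 1 = xs.length + 1 := by
        have h' := congrArg List.length hd
        simp only [List.length_append, List.length_cons] at h'
        omega
      have hlen' : xs.length + 1 ≤ n + 1 := by simpa using hlen
      have hleAB : ∀ a ∈ A ++ M :: B, M ≤ a := by
        intro a ha; exact hM'le a (hd ▸ ha)
      have hkM : k ≠ M := by
        intro h; exact hk (h ▸ hd ▸ List.mem_append_right _ (by simp))
      rcases lt_or_gt_of_ne hkM with hkM' | hkM'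
      · rw [fkt_eq_lt k x xs M hM'mem hM'le hkM']
        simp
      · rw [hd] at hk ⊢
        have hkA : k ∉ A := fun h => hk (List.mem_append_left _ h)
        have hkB : k ∉ B := fun h => hk (List.mem_append_right _ (by simp [h]))
        rcases eq_or_ne A [] with hA | hAne
        · subst hA
          simp only [List.nil_append] at hleAB ⊢
          rw [fkt_eq_top k M B (fun a ha => hleAB a (by simp [ha])) hkM']
          have ihB := ih B (by simp at hlenAB; omega) k hkB a
          simp only [List.mem_append, List.mem_cons, List.mem_singleton, ihB]
          tauto
        · rcases eq_or_ne B [] with hB | hBne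
          · subst hB
            rw [fkt_eq_last k M A hAne hmA hleAB hkM']
            simp only [List.mem_cons, List.mem_append, List.mem_singleton]
            tauto
          · rw [fkt_eq_mid k M A B hAne hBne hmA hleAB hkM']
            have ihA := ih A (by omega) k hkA a
            simp only [List.mem_append, List.mem_cons, ihA]
            tauto

lemma mem_fkt (σ : List ℕ) (k : ℕ) (hk : k ∉ σ) (a : ℕ) :
    a ∈ fkt k σ ↔ a = k ∨ a ∈ σ :=
  mem_fkt_aux σ.length σ le_rfl k hk a

lemma fkt_ne_nil (σ : List ℕ) (k : ℕ) (hk : k ∉ σ) : fkt k σ ≠ [] :=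
  List.ne_nil_of_mem ((mem_fkt σ k hk k).mpr (Or.inl rfl))

/-! ### des lemmas -/

lemma des_nil : des [] = 0 := by simp [des]

lemma des_single (x : ℕ) : des [x] = 0 := by simp [des]

lemma des_cons_cons (x y : ℕ) (t : List ℕ) :
    des (x :: y :: t) = (if y < x then 1 else 0) + des (y :: t) := by
  simp only [des, List.length_cons, Nat.add_sub_cancel]
  rw [Finset.card_filter, Finset.card_filter, Finset.sum_range_succ']
  simp only [List.getD_cons_succ, List.getD_cons_zero]
  omega

lemma des_cons_min (m : ℕ) (v : List ℕ) (hv : ∀ a ∈ v, m ≤ a) :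
    des (m :: v) = des v := by
  cases v with
  | nil => rw [des_single, des_nil]
  | cons y t =>
    rw [des_cons_cons, if_neg (by have := hv y (by simp); omega), Nat.zero_add]

lemma des_append_min (m : ℕ) : ∀ (u : List ℕ), u ≠ [] → (∀ a ∈ u, m < a) →
    ∀ (v : List ℕ), (∀ a ∈ v, m ≤ a) → des (u ++ m :: v) = des u + 1 + des v := by
  intro u
  induction u with
  | nil => intro h; exact absurd rfl h
  | cons x u ih =>
    intro _ hu v hv
    cases u with
    | nil =>
      simp only [List.singleton_append]
      rw [des_cons_cons, if_pos (hu x (by simp)), des_cons_min m v hv, des_single]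
    | cons y t =>
      have e1 : (x :: y :: t) ++ m :: v = x :: (y :: (t ++ m :: v)) := by simp
      have e2 : (y :: t) ++ m :: v = y :: (t ++ m :: v) := by simp
      rw [e1, des_cons_cons, ← e2,
        ih (by simp) (fun a ha => hu a (by simp [List.mem_cons] at ha ⊢; tauto)) v hv,
        des_cons_cons x y t]
      omega

lemma aix_fkt_lt (k M : ℕ) (τ : List ℕ) (hne : τ ≠ []) (hM : M ∈ τ)
    (hle : ∀ a ∈ τ, M ≤ a) (h : k < M) : aix (fkt k τ) = 1 + aix τ := by
  obtain ⟨x, xs, rfl⟩ : ∃ x xs, τ = x :: xs := by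
    cases τ with | nil => exact absurd rfl hne | cons x xs => exact ⟨x, xs, rfl⟩
  rw [fkt_eq_lt k x xs M hM hle h,
    aix_eq_top k (x :: xs) (fun a ha => le_trans h.le (hle a ha))]
lemma main_base (k l : ℕ) (hk : k ∉ fkt l []) (h0 : aix (fkt k (fkt l [])) = 0) :
    des (fkt k (fkt l [])) = 1 + des (fkt k []) := by
  rw [fkt_nil] at hk h0 ⊢
  have hkl : k ≠ l := by simpa using hk
  rcases lt_or_gt_of_ne hkl with h | h
  · rw [aix_fkt_lt k l [l] (by simp) (by simp) (by simp) h] at h0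
    omega
  · rw [fkt_eq_top k l [] (by simp) h, fkt_nil] at h0 ⊢
    rw [show ([k] : List ℕ) ++ [l] = [k, l] from rfl, des_cons_cons, des_single,
      des_single, if_pos h]

lemma main_aux : ∀ (n : ℕ) (σ : List ℕ), σ.length ≤ n → ∀ k l : ℕ,
    σ.Nodup → l ∉ σ → (fkt l σ).Nodup → k ∉ fkt l σ →
    aix (fkt k (fkt l σ)) = 0 → des (fkt k (fkt l σ)) = 1 + des (fkt k σ) := by
  intro n
  induction n with
  | zero =>
    intro σ hlen k l _ _ _ hk h0
    have hσnil : σ = [] := List.length_eq_zero_iff.mp (Nat.le_zero.mp hlen)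
    subst hσnil
    exact main_base k l hk h0
  | succ n ih =>
    intro σ hlen k l hσ hl hτn hk h0
    cases σ with
    | nil => exact main_base k l hk h0
    | cons x xs =>
      have hlen' : xs.length + 1 ≤ n + 1 := by simpa using hlen
      have hM'mem := foldr_min_mem xs x
      have hM'le := foldr_min_le xs x
      obtain ⟨A, B, hd, hmA, -, -⟩ := first_occ _ (x :: xs) hM'mem
      set M := xs.foldr min x with hMdef
      have hlenAB : A.length + B.length + 1 = xs.length + 1 := by
        have h' := congrArg List.length hd
        simp only [List.length_append, List.length_cons] at h'
        omega
      have hleAB : ∀ a ∈ A ++ M :: B, M ≤ a := fun a ha => hM'le a (hd ▸ ha)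
      have hσ' : (A ++ M :: B).Nodup := hd ▸ hσ
      have hmB : M ∉ B := by
        have h1 : (M :: B).Nodup := hσ'.of_append_right
        exact (List.nodup_cons.mp h1).1
      have hAgt : ∀ a ∈ A, M < a := fun a ha =>
        lt_of_le_of_ne (hleAB a (List.mem_append_left _ ha)) (fun h => hmA (h ▸ ha))
      have hBgt : ∀ a ∈ B, M < a := fun a ha =>
        lt_of_le_of_ne (hleAB a (List.mem_append_right _ (List.mem_cons_of_mem _ ha)))
          (fun h => hmB (h ▸ ha))
      have hlM : l ≠ M := fun h => hl (by rw [h]; exact hM'mem)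
      rcases lt_or_gt_of_ne hlM with hlM' | hlM'
      · -- l < M : fkt l σ = l :: σ
        have hτ : fkt l (x :: xs) = l :: x :: xs := fkt_eq_lt l x xs M hM'mem hM'le hlM'
        rw [hτ] at hk h0 ⊢
        have hkl : k ≠ l := fun h => hk (by rw [h]; simp)
        have hlle : ∀ a ∈ x :: xs, l ≤ a := fun a ha => le_trans hlM'.le (hM'le a ha)
        rcases lt_or_gt_of_ne hkl with hkl' | hkl'
        · rw [aix_fkt_lt k l (l :: x :: xs) (by simp) (by simp)
            (fun a ha => by
              rcases List.mem_cons.mp ha with rfl | ha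
              · exact le_refl _
              · exact hlle a ha) hkl'] at h0
          omega
        · rw [fkt_eq_top k l (x :: xs) hlle hkl'] at h0 ⊢
          have hkσ : k ∉ (x :: xs) := fun h => hk (List.mem_cons_of_mem _ h)
          rw [des_append_min l (fkt k (x :: xs)) (fkt_ne_nil _ _ hkσ)
            (fun a ha => by
              rcases (mem_fkt _ k hkσ a).mp ha with rfl | ha
              · exact hkl'
              · exact lt_of_lt_of_le hlM' (hM'le a ha))
            [] (by simp), des_nil]
          omega
      · -- M < l
        rw [hd] at hσ hl hτn hk h0 ⊢
        have hlA : l ∉ A := fun h => hl (List.mem_append_left _ h)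
        have hlB : l ∉ B := fun h => hl (List.mem_append_right _ (List.mem_cons_of_mem _ h))
        rcases eq_or_ne A [] with hA | hAne
        · -- subcase (a) : contradiction with h0
          subst hA
          simp only [List.nil_append] at hσ hl hτn hk h0 hleAB ⊢
          have hτ : fkt l (M :: B) = fkt l B ++ [M] :=
            fkt_eq_top l M B (fun a ha => (hBgt a ha).le) hlM'
          rw [hτ] at hk h0
          have hu_ne : fkt l B ≠ [] := fkt_ne_nil B l hlB
          have hu_mem := mem_fkt B l hlB
          have hu_gt : ∀ a ∈ fkt l B, M < a := fun a ha => by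
            rcases (hu_mem a).mp ha with rfl | ha
            · exact hlM'
            · exact hBgt a ha
          have hmu : M ∉ fkt l B := fun h => lt_irrefl M (hu_gt M h)
          have hle_τ : ∀ a ∈ fkt l B ++ [M], M ≤ a := by
            intro a ha
            rcases List.mem_append.mp ha with ha | ha
            · exact (hu_gt a ha).le
            · simp at ha; omega
          have hkM2 : k ≠ M := fun h =>
            hk (by rw [h]; exact List.mem_append_right _ (by simp))
          rcases lt_or_gt_of_ne hkM2 with hkM' | hkM'
          · rw [aix_fkt_lt k M (fkt l B ++ [M]) (by simp)
              (List.mem_append_right _ (by simp)) hle_τ hkM'] at h0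
            omega
          · rw [fkt_eq_last k M (fkt l B) hu_ne hmu hle_τ hkM'] at h0
            rw [show k :: M :: fkt l B = [k] ++ M :: fkt l B from rfl] at h0
            rw [aix_eq_mid M [k] (fkt l B) (by simp) hu_ne (by simp [Ne.symm hkM2])
              (by
                intro a ha
                rcases List.mem_append.mp ha with ha | ha
                · simp at ha; omega
                · rcases List.mem_cons.mp ha with rfl | ha
                  · exact le_refl _
                  · exact (hu_gt a ha).le), aix_single] at h0
            omega
        · rcases eq_or_ne B [] with hB | hBne
          · -- subcase (b)
            subst hB
            have hτ : fkt l (A ++ [M]) = l :: M :: A := fkt_eq_last l M A hAne hmA hleAB hlM'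
            rw [hτ] at hk h0 ⊢
            have hkl : k ≠ l := fun h => hk (by rw [h]; simp)
            have hkM2 : k ≠ M := fun h => hk (by rw [h]; simp)
            have hkA : k ∉ A := fun h => hk (by simp [h])
            have hle_τ : ∀ a ∈ l :: M :: A, M ≤ a := by
              intro a ha
              rcases List.mem_cons.mp ha with rfl | ha
              · exact hlM'.le
              rcases List.mem_cons.mp ha with rfl | ha
              · exact le_refl _
              · exact (hAgt a ha).le
            rcases lt_or_gt_of_ne hkM2 with hkM' | hkM'
            · rw [aix_fkt_lt k M (l :: M :: A) (by simp) (by simp) hle_τ hkM'] at h0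
              omega
            · rw [show l :: M :: A = [l] ++ M :: A from rfl] at h0 hle_τ ⊢
              rw [fkt_eq_mid k M [l] A (by simp) hAne (by simp [Ne.symm hlM]) hle_τ hkM']
                at h0 ⊢
              rcases lt_or_gt_of_ne hkl with hkl' | hkl'
              · -- k < l : contradiction
                rw [fkt_eq_lt k l [] l (by simp) (by simp) hkl'] at h0
                rw [aix_eq_mid M (k :: [l]) A (by simp) hAne
                  (by simp [Ne.symm hkM2, Ne.symm hlM])
                  (by
                    intro a ha
                    rcases List.mem_append.mp ha with ha | ha
                    · simp at ha; omega
                    · rcases List.mem_cons.mp ha with rfl | ha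
                      · exact le_refl _
                      · exact (hAgt a ha).le)] at h0
                rw [aix_eq_top k [l] (by simp; omega)] at h0
                omega
              · rw [fkt_eq_top k l [] (by simp) hkl', fkt_nil] at h0 ⊢
                rw [show ([k] : List ℕ) ++ [l] = [k, l] from rfl] at h0 ⊢
                rw [fkt_eq_last k M A hAne hmA hleAB hkM']
                rw [des_append_min M [k, l] (by simp)
                  (by intro a ha; simp at ha; omega) A (fun a ha => (hAgt a ha).le)]
                rw [show ([k, l] : List ℕ) = k :: l :: [] from rfl, des_cons_cons,
                  des_single, des_cons_cons, des_cons_min M A (fun a ha => (hAgt a ha).le)]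
                rw [if_pos (show l < k from hkl'), if_pos (show M < k from hkM')]
                omega
          · -- subcase (c)
            have hτ : fkt l (A ++ M :: B) = fkt l A ++ M :: B :=
              fkt_eq_mid l M A B hAne hBne hmA hleAB hlM'
            rw [hτ] at hk h0 hτn ⊢
            have hu_ne : fkt l A ≠ [] := fkt_ne_nil A l hlA
            have hu_mem := mem_fkt A l hlA
            have hu_gt : ∀ a ∈ fkt l A, M < a := fun a ha => by
              rcases (hu_mem a).mp ha with rfl | ha
              · exact hlM'
              · exact hAgt a ha
            have hmu : M ∉ fkt l A := fun h => lt_irrefl M (hu_gt M h)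
            have hle_τ : ∀ a ∈ fkt l A ++ M :: B, M ≤ a := by
              intro a ha
              rcases List.mem_append.mp ha with ha | ha
              · exact (hu_gt a ha).le
              · rcases List.mem_cons.mp ha with rfl | ha
                · exact le_refl _
                · exact (hBgt a ha).le
            have hkM2 : k ≠ M := fun h =>
              hk (by rw [h]; exact List.mem_append_right _ (by simp))
            have hku : k ∉ fkt l A := fun h => hk (List.mem_append_left _ h)
            have hkA : k ∉ A := fun h => hku ((hu_mem k).mpr (Or.inr h))
            have hkB : k ∉ B := fun h =>
              hk (List.mem_append_right _ (List.mem_cons_of_mem _ h))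
            rcases lt_or_gt_of_ne hkM2 with hkM' | hkM'
            · rw [aix_fkt_lt k M (fkt l A ++ M :: B) (by simp)
                (List.mem_append_right _ (by simp)) hle_τ hkM'] at h0
              omega
            · rw [fkt_eq_mid k M (fkt l A) B hu_ne hBne hmu hle_τ hkM'] at h0 ⊢
              have hw_ne : fkt k (fkt l A) ≠ [] := fkt_ne_nil _ k hku
              have hw_mem := mem_fkt (fkt l A) k hku
              have hw_gt : ∀ a ∈ fkt k (fkt l A), M < a := fun a ha => by
                rcases (hw_mem a).mp ha with rfl | ha
                · exact hkM'
                · exact hu_gt a ha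
              have hmw : M ∉ fkt k (fkt l A) := fun h => lt_irrefl M (hw_gt M h)
              have hle_w : ∀ a ∈ fkt k (fkt l A) ++ M :: B, M ≤ a := by
                intro a ha
                rcases List.mem_append.mp ha with ha | ha
                · exact (hw_gt a ha).le
                · rcases List.mem_cons.mp ha with rfl | ha
                  · exact le_refl _
                  · exact (hBgt a ha).le
              rw [aix_eq_mid M (fkt k (fkt l A)) B hw_ne hBne hmw hle_w] at h0
              have hAnodup : A.Nodup := hσ.of_append_left
              have hunodup : (fkt l A).Nodup := hτn.of_append_left
              have ihres := ih A (by omega) k l hAnodup hlA hunodup hku h0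
              rw [des_append_min M (fkt k (fkt l A)) hw_ne hw_gt B
                (fun a ha => (hBgt a ha).le)]
              rw [fkt_eq_mid k M A B hAne hBne hmA hleAB hkM']
              rw [des_append_min M (fkt k A) (fkt_ne_nil A k hkA)
                (fun a ha => by
                  rcases (mem_fkt A k hkA a).mp ha with rfl | ha
                  · exact hkM'
                  · exact hAgt a ha) B (fun a ha => (hBgt a ha).le)]
              omega
/-- If `aix f(k,τ) = 0` and `τ = f(l,σ)`, then
`des f(k,τ) = 1 + des f(k,σ)`. -/
theorem des_fkt_of_aix_fkt_eq_zero (k l : ℕ) (τ σ : List ℕ) (hτ : τ.Nodup)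
    (hk : k ∉ τ) (hσ : σ.Nodup) (hl : l ∉ σ) (hτσ : τ = fkt l σ)
    (h0 : aix (fkt k τ) = 0) :
    des (fkt k τ) = 1 + des (fkt k σ) := by
  subst hτσ
  exact main_aux σ.length σ le_rfl k l hσ hl hτ hk h0

end PaperStats
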